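/- The generalized Leibniz identity for powers of the Laplacian: for any polynomials f, g ∈ C[z_1,...,z_n] and any m ≥ 1, Δ^m(fg) = Σ_{k_1+k_2+k_3=m, k_i≥0} 2^{k_2} · m!/(k_1! k_2! k_3!) · Σ_{s∈N^n, |s|=k_2} (k_2!/s!) · (∂^{k_2} Δ^{k_1} f / ∂z^s) · (∂^{k_2} Δ^{k_3} g / ∂z^s). -/

import Mathlib

open MvPolynomial

/-- The iterated partial derivative `∂^{|s|}/∂z^s` given by the multi-index `s`. -/
noncomputable def mderiv {n : ℕ} (s : Fin n → ℕ) (g : MvPolynomial (Fin n) ℂ) :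
    MvPolynomial (Fin n) ℂ :=
  (List.finRange n).foldr (fun i acc => (fun p => MvPolynomial.pderiv i p)^[s i] acc) g

/-- The Laplace operator `Δ = ∑ ∂²/∂z_i²`. -/
noncomputable def lap {n : ℕ} (g : MvPolynomial (Fin n) ℂ) : MvPolynomial (Fin n) ℂ :=
  ∑ i, MvPolynomial.pderiv i (MvPolynomial.pderiv i g)

lemma pderiv_comm' {σ R : Type*} [CommSemiring R] (i j : σ) (p : MvPolynomial σ R) :
    pderiv i (pderiv j p) = pderiv j (pderiv i p) := by
  classical
  induction p using MvPolynomial.induction_on' with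
  | monomial s a =>
    simp only [pderiv_monomial]
    rcases eq_or_ne i j with rfl | hij
    · rfl
    · have h1 : (s - Finsupp.single j 1 : σ →₀ ℕ) i = s i := by
        simp [Finsupp.tsub_apply, Finsupp.single_apply, hij.symm]
      have h2 : (s - Finsupp.single i 1 : σ →₀ ℕ) j = s j := by
        simp [Finsupp.tsub_apply, Finsupp.single_apply, hij]
      rw [h1, h2, tsub_right_comm]
      ring_nf
  | add p q hp hq => simp [hp, hq]

variable {n : ℕ}

/-- `pderiv i` as an endomorphism. -/
noncomputable def P (i : Fin n) : Module.End ℂ (MvPolynomial (Fin n) ℂ) :=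
  (pderiv i : Derivation ℂ _ _).toLinearMap

lemma P_comm (i j : Fin n) : Commute (P i) (P j) := by
  apply LinearMap.ext
  intro p
  exact pderiv_comm' i j p

/-- `mderiv` as an endomorphism. -/
noncomputable def mderivL (s : Fin n → ℕ) : Module.End ℂ (MvPolynomial (Fin n) ℂ) :=
  ((List.finRange n).map (fun i => P i ^ s i)).prod

lemma mderiv_eq (s : Fin n → ℕ) (g : MvPolynomial (Fin n) ℂ) :
    mderiv s g = mderivL s g := by
  rw [mderiv, mderivL]
  induction List.finRange n with
  | nil => simp
  | cons i l ih =>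
    simp only [List.foldr_cons, List.map_cons, List.prod_cons, Module.End.mul_apply, ih]
    rw [Module.End.pow_apply]
    rfl

/-- `lap` as an endomorphism. -/
noncomputable def lapL : Module.End ℂ (MvPolynomial (Fin n) ℂ) := ∑ i, P i * P i

lemma lap_eq (g : MvPolynomial (Fin n) ℂ) : lap g = lapL g := by
  simp [lap, lapL, LinearMap.sum_apply, Module.End.mul_apply, P]

lemma P_comm_mderivL (j : Fin n) (s : Fin n → ℕ) : Commute (P j) (mderivL s) := by
  apply Commute.list_prod_right
  intro y hy
  simp only [List.mem_map] at hy
  obtain ⟨i, -, rfl⟩ := hy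
  exact (P_comm j i).pow_right _

lemma lapL_comm_mderivL (s : Fin n → ℕ) : Commute (lapL : Module.End ℂ (MvPolynomial (Fin n) ℂ)) (mderivL s) := by
  apply Commute.sum_left
  intro i _
  exact ((P_comm_mderivL i s)).mul_left (P_comm_mderivL i s)

lemma map_congr_aux (l : List (Fin n)) (s t : Fin n → ℕ) (h : ∀ i ∈ l, s i = t i) :
    (l.map (fun i => P i ^ s i)).prod = (l.map (fun i => P i ^ t i)).prod := by
  induction l with
  | nil => rfl
  | cons i l ih =>
    simp only [List.map_cons, List.prod_cons]
    rw [h i (by simp), ih (fun i hi => h i (by simp [hi]))]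

lemma mderivL_single_add_aux (s : Fin n → ℕ) (j : Fin n) (l : List (Fin n))
    (hmem : j ∈ l) (hnd : l.Nodup) :
    (l.map (fun i => P i ^ (s + Pi.single j 1 : Fin n → ℕ) i)).prod
      = P j * (l.map (fun i => P i ^ s i)).prod := by
  induction l with
  | nil => simp at hmem
  | cons i l ih =>
    simp only [List.map_cons, List.prod_cons]
    rcases eq_or_ne i j with rfl | hij
    · have hjl : i ∉ l := (List.nodup_cons.mp hnd).1
      rw [map_congr_aux l (s + Pi.single i 1) s
        (fun k hk => by
          have hki : k ≠ i := fun h => hjl (h ▸ hk)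
          simp [Pi.single_eq_of_ne hki])]
      have h1 : (s + Pi.single i 1 : Fin n → ℕ) i = s i + 1 := by simp
      rw [h1, pow_succ', mul_assoc]
    · have hjl : j ∈ l := by
        rcases List.mem_cons.mp hmem with h | h
        · exact absurd h.symm hij
        · exact h
      have h1 : (s + Pi.single j 1 : Fin n → ℕ) i = s i := by
        simp [Pi.single_eq_of_ne hij]
      rw [h1, ih hjl (List.nodup_cons.mp hnd).2, ← mul_assoc, ← mul_assoc]
      congr 1
      exact ((P_comm j i).pow_right _).symm.eq

lemma mderivL_single_add (s : Fin n → ℕ) (j : Fin n) :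
    mderivL (s + Pi.single j 1) = P j * mderivL s :=
  mderivL_single_add_aux s j _ (List.mem_finRange j) (List.nodup_finRange n)

lemma sum_sub_single {r : ℕ} (t : Fin r → ℕ) (j : Fin r) (hj : t j ≠ 0) :
    ∑ i, (t - Pi.single j 1 : Fin r → ℕ) i = (∑ i, t i) - 1 := by
  have hle : ∀ i ∈ (Finset.univ : Finset (Fin r)), (Pi.single j 1 : Fin r → ℕ) i ≤ t i := by
    intro i _
    rcases eq_or_ne i j with rfl | hij
    · simpa using Nat.one_le_iff_ne_zero.mpr hj
    · simp [Pi.single_eq_of_ne hij]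
  have : ∀ i, (t - Pi.single j 1 : Fin r → ℕ) i = t i - (Pi.single j 1 : Fin r → ℕ) i :=
    fun i => rfl
  simp only [this]
  rw [Finset.sum_tsub_distrib _ hle, Finset.sum_pi_single']
  simp

lemma prod_factorial_sub_single {r : ℕ} (t : Fin r → ℕ) (j : Fin r) (hj : t j ≠ 0) :
    t j * ∏ i, Nat.factorial ((t - Pi.single j 1 : Fin r → ℕ) i)
      = ∏ i, Nat.factorial (t i) := by
  have ha := Finset.mul_prod_erase Finset.univ
      (fun i => Nat.factorial ((t - Pi.single j 1 : Fin r → ℕ) i)) (Finset.mem_univ j)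
  have hb := Finset.mul_prod_erase Finset.univ
      (fun i => Nat.factorial (t i)) (Finset.mem_univ j)
  rw [← ha, ← hb]
  beta_reduce
  have h1 : (t - Pi.single j 1 : Fin r → ℕ) j = t j - 1 := by simp
  have h2 : ∀ i ∈ Finset.univ.erase j,
      Nat.factorial ((t - Pi.single j 1 : Fin r → ℕ) i) = Nat.factorial (t i) := by
    intro i hi
    have hi' : i ≠ j := (Finset.mem_erase.mp hi).1
    simp [Pi.single_eq_of_ne hi']
  rw [h1, Finset.prod_congr rfl h2, ← mul_assoc,
    Nat.mul_factorial_pred hj]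

lemma pascal {r : ℕ} (t : Fin r → ℕ) (h : 0 < ∑ i, t i) :
    ∑ j ∈ Finset.univ.filter (fun j => t j ≠ 0),
        Nat.multinomial Finset.univ (t - Pi.single j 1 : Fin r → ℕ)
      = Nat.multinomial Finset.univ t := by
  have hprodpos : 0 < ∏ i, Nat.factorial (t i) :=
    Finset.prod_pos (fun i _ => Nat.factorial_pos _)
  apply Nat.eq_of_mul_eq_mul_left hprodpos
  rw [Finset.mul_sum]
  have key : ∀ j ∈ Finset.univ.filter (fun j => t j ≠ 0),
      (∏ i, Nat.factorial (t i)) * Nat.multinomial Finset.univ (t - Pi.single j 1 : Fin r → ℕ)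
        = t j * Nat.factorial ((∑ i, t i) - 1) := by
    intro j hj
    have hj' : t j ≠ 0 := (Finset.mem_filter.mp hj).2
    rw [← prod_factorial_sub_single t j hj', mul_assoc,
      Nat.multinomial_spec, sum_sub_single t j hj']
  rw [Finset.sum_congr rfl key, ← Finset.sum_mul]
  have hsum : ∑ j ∈ Finset.univ.filter (fun j => t j ≠ 0), t j = ∑ j, t j := by
    rw [Finset.sum_filter_of_ne]
    intro j _ hne
    exact hne
  rw [hsum, Nat.multinomial_spec, Nat.mul_factorial_pred h.ne']

open Finset in
lemma core_reindex {r m : ℕ} {M : Type*} [AddCommMonoid M] [Module ℂ M]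
    (x : (Fin r → ℕ) → M) :
    ∑ k ∈ Finset.Nat.antidiagonalTuple r m, ∑ j : Fin r,
        (Nat.multinomial Finset.univ k : ℂ) • x (k + Pi.single j 1)
      = ∑ t ∈ Finset.Nat.antidiagonalTuple r (m + 1),
          (Nat.multinomial Finset.univ t : ℂ) • x t := by
  have hrhs : ∀ t ∈ Finset.Nat.antidiagonalTuple r (m + 1),
      (Nat.multinomial Finset.univ t : ℂ) • x t
        = ∑ j ∈ Finset.univ.filter (fun j => t j ≠ 0),
            (Nat.multinomial Finset.univ (t - Pi.single j 1 : Fin r → ℕ) : ℂ) • x t := by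
    intro t ht
    rw [← Finset.sum_smul, ← Nat.cast_sum, pascal]
    rw [Finset.Nat.mem_antidiagonalTuple.mp ht]
    omega
  rw [Finset.sum_congr rfl hrhs]
  rw [Finset.sum_sigma', Finset.sum_sigma']
  refine Finset.sum_nbij' (fun p => ⟨p.1 + Pi.single p.2 1, p.2⟩)
    (fun p => ⟨p.1 - Pi.single p.2 1, p.2⟩) ?_ ?_ ?_ ?_ ?_
  · rintro ⟨k, j⟩ hkj
    simp only [Finset.mem_sigma, Finset.mem_filter, Finset.mem_univ, true_and] at hkj ⊢
    constructor
    · rw [Finset.Nat.mem_antidiagonalTuple] at hkj ⊢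
      have : ∑ i, (k + Pi.single j 1 : Fin r → ℕ) i
          = (∑ i, k i) + ∑ i, (Pi.single j 1 : Fin r → ℕ) i := by
        rw [← Finset.sum_add_distrib]
        rfl
      rw [this, Finset.sum_pi_single', if_pos (Finset.mem_univ j), hkj.1]
    · simp
  · rintro ⟨t, j⟩ htj
    simp only [Finset.mem_sigma, Finset.mem_filter, Finset.mem_univ, true_and] at htj ⊢
    rw [Finset.Nat.mem_antidiagonalTuple] at htj ⊢
    rw [sum_sub_single t j htj.2, htj.1]
    exact ⟨rfl, trivial⟩
  · rintro ⟨k, j⟩ hkj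
    simp only [Sigma.mk.inj_iff, heq_eq_eq, and_true]
    funext i
    rcases eq_or_ne i j with rfl | hij
    · simp [Pi.single_eq_same]
    · simp [Pi.single_eq_of_ne hij]
  · rintro ⟨t, j⟩ htj
    simp only [Finset.mem_sigma, Finset.mem_filter, Finset.mem_univ, true_and] at htj
    simp only [Sigma.mk.inj_iff, heq_eq_eq, and_true]
    apply tsub_add_cancel_of_le
    intro i
    rcases eq_or_ne i j with rfl | hij
    · simpa using Nat.one_le_iff_ne_zero.mpr htj.2
    · simp [Pi.single_eq_of_ne hij]
  · rintro ⟨k, j⟩ hkj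
    have h : k + Pi.single j 1 - Pi.single j 1 = k := by
      funext i
      rcases eq_or_ne i j with rfl | hij
      · simp [Pi.single_eq_same]
      · simp [Pi.single_eq_of_ne hij]
    simp only [h]

lemma iter_formula {r : ℕ} {M : Type*} [AddCommMonoid M] [Module ℂ M] (L : M →ₗ[ℂ] M)
    (T : (Fin r → ℕ) → M) (hT : ∀ k, L (T k) = ∑ j : Fin r, T (k + Pi.single j 1)) (m : ℕ) :
    (⇑L)^[m] (T 0) = ∑ k ∈ Finset.Nat.antidiagonalTuple r m,
      (Nat.multinomial Finset.univ k : ℂ) • T k := by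
  induction m with
  | zero =>
    rw [Finset.Nat.antidiagonalTuple_zero_right, Finset.sum_singleton]
    have h1 : Nat.multinomial Finset.univ (0 : Fin r → ℕ) = 1 := by
      simp [Nat.multinomial]
    rw [h1, Nat.cast_one, one_smul]
    rfl
  | succ m ih =>
    rw [Function.iterate_succ_apply', ih, map_sum]
    have step : ∀ k ∈ Finset.Nat.antidiagonalTuple r m,
        L ((Nat.multinomial Finset.univ k : ℂ) • T k)
          = ∑ j : Fin r, (Nat.multinomial Finset.univ k : ℂ) • T (k + Pi.single j 1) := by
      intro k _
      rw [map_smul, hT, Finset.smul_sum]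
    rw [Finset.sum_congr rfl step, core_reindex]

variable {n : ℕ}

lemma lap_sum {α : Type*} (s : Finset α) (h : α → MvPolynomial (Fin n) ℂ) :
    lap (∑ x ∈ s, h x) = ∑ x ∈ s, lap (h x) := by
  simp only [lap_eq]
  exact map_sum lapL h s

lemma lap_smul (c : ℂ) (p : MvPolynomial (Fin n) ℂ) : lap (c • p) = c • lap p := by
  simp only [lap_eq]
  exact map_smul lapL c p

lemma mderiv_lap (s : Fin n → ℕ) (p : MvPolynomial (Fin n) ℂ) :
    lap (mderiv s p) = mderiv s (lap p) := by
  rw [mderiv_eq, lap_eq, lap_eq, mderiv_eq, ← Module.End.mul_apply, ← Module.End.mul_apply,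
    (lapL_comm_mderivL s).eq]

lemma pderiv_mderiv (s : Fin n → ℕ) (j : Fin n) (p : MvPolynomial (Fin n) ℂ) :
    mderiv (s + Pi.single j 1) p = pderiv j (mderiv s p) := by
  rw [mderiv_eq, mderiv_eq, mderivL_single_add, Module.End.mul_apply]
  rfl

lemma mderiv_zero (p : MvPolynomial (Fin n) ℂ) : mderiv (0 : Fin n → ℕ) p = p := by
  rw [mderiv]
  induction List.finRange n with
  | nil => rfl
  | cons i l ih => simpa using ih

lemma lap_mul (f g : MvPolynomial (Fin n) ℂ) :
    lap (f * g) = lap f * g + f * lap g + (2 : ℂ) • ∑ i, pderiv i f * pderiv i g := by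
  simp only [lap, pderiv_mul, map_add]
  rw [Finset.sum_add_distrib, Finset.sum_add_distrib, Finset.sum_add_distrib,
    Finset.sum_mul, Finset.mul_sum, two_smul]
  abel

/-- The summand family. -/
noncomputable def Tt (f g : MvPolynomial (Fin n) ℂ) (a b c : ℕ) : MvPolynomial (Fin n) ℂ :=
  ∑ s ∈ Finset.Nat.antidiagonalTuple n b,
    ((2 ^ b * Nat.multinomial Finset.univ s : ℕ) : ℂ)
      • (mderiv s (lap^[a] f) * mderiv s (lap^[c] g))

lemma lap_Tt (f g : MvPolynomial (Fin n) ℂ) (a b c : ℕ) :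
    lap (Tt f g a b c) = Tt f g (a+1) b c + Tt f g a (b+1) c + Tt f g a b (c+1) := by
  rw [Tt, lap_sum]
  have step : ∀ s ∈ Finset.Nat.antidiagonalTuple n b,
      lap (((2 ^ b * Nat.multinomial Finset.univ s : ℕ) : ℂ)
          • (mderiv s (lap^[a] f) * mderiv s (lap^[c] g)))
        = ((2 ^ b * Nat.multinomial Finset.univ s : ℕ) : ℂ)
            • (mderiv s (lap^[a+1] f) * mderiv s (lap^[c] g))
          + ((2 ^ b * Nat.multinomial Finset.univ s : ℕ) : ℂ)
            • (mderiv s (lap^[a] f) * mderiv s (lap^[c+1] g))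
          + ((2 ^ (b+1) : ℕ) : ℂ) • ∑ i : Fin n, (Nat.multinomial Finset.univ s : ℂ)
              • (mderiv (s + Pi.single i 1) (lap^[a] f)
                * mderiv (s + Pi.single i 1) (lap^[c] g)) := by
    intro s _
    rw [lap_smul, lap_mul, mderiv_lap, mderiv_lap,
      show lap (lap^[a] f) = lap^[a+1] f from (Function.iterate_succ_apply' lap a f).symm,
      show lap (lap^[c] g) = lap^[c+1] g from (Function.iterate_succ_apply' lap c g).symm]
    rw [smul_add, smul_add]
    congr 1
    have h2 : ∀ i : Fin n,
        pderiv i (mderiv s (lap^[a] f)) * pderiv i (mderiv s (lap^[c] g))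
          = mderiv (s + Pi.single i 1) (lap^[a] f)
              * mderiv (s + Pi.single i 1) (lap^[c] g) := by
      intro i
      rw [pderiv_mderiv, pderiv_mderiv]
    rw [Finset.sum_congr rfl (fun i _ => h2 i)]
    rw [Finset.smul_sum, Finset.smul_sum, Finset.smul_sum]
    refine Finset.sum_congr rfl fun i _ => ?_
    simp only [smul_smul]
    congr 1
    push_cast
    ring
  rw [Finset.sum_congr rfl step, Finset.sum_add_distrib, Finset.sum_add_distrib]
  have e1 : ∑ s ∈ Finset.Nat.antidiagonalTuple n b,
      ((2 ^ b * Nat.multinomial Finset.univ s : ℕ) : ℂ)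
        • (mderiv s (lap^[a+1] f) * mderiv s (lap^[c] g)) = Tt f g (a+1) b c := rfl
  have e2 : ∑ s ∈ Finset.Nat.antidiagonalTuple n b,
      ((2 ^ b * Nat.multinomial Finset.univ s : ℕ) : ℂ)
        • (mderiv s (lap^[a] f) * mderiv s (lap^[c+1] g)) = Tt f g a b (c+1) := rfl
  have e3 : ∑ s ∈ Finset.Nat.antidiagonalTuple n b,
      ((2 ^ (b+1) : ℕ) : ℂ) • ∑ i : Fin n, (Nat.multinomial Finset.univ s : ℂ)
          • (mderiv (s + Pi.single i 1) (lap^[a] f)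
            * mderiv (s + Pi.single i 1) (lap^[c] g))
        = Tt f g a (b+1) c := by
    rw [← Finset.smul_sum,
      core_reindex (fun t => mderiv t (lap^[a] f) * mderiv t (lap^[c] g)), Tt,
      Finset.smul_sum]
    refine Finset.sum_congr rfl fun t _ => ?_
    rw [smul_smul]
    congr 1
    push_cast
    ring
  rw [e1, e2, e3]
  abel


/-- The generalized Leibniz identity for powers of the Laplacian. -/
theorem laplacian_power_leibniz {n : ℕ} (f g : MvPolynomial (Fin n) ℂ) (m : ℕ) (hm : 1 ≤ m) :
    lap^[m] (f * g) =
      ∑ k ∈ Finset.Nat.antidiagonalTuple 3 m,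
        ∑ s ∈ Finset.Nat.antidiagonalTuple n (k 1),
          ((2 ^ (k 1) * Nat.multinomial Finset.univ k * Nat.multinomial Finset.univ s : ℕ) : ℂ)
            • (mderiv s (lap^[k 0] f) * mderiv s (lap^[k 2] g)) := by
  set S : (Fin 3 → ℕ) → MvPolynomial (Fin n) ℂ :=
    fun k => Tt f g (k 0) (k 1) (k 2) with hSdef
  have hS : ∀ k, (lapL : Module.End ℂ (MvPolynomial (Fin n) ℂ)) (S k)
      = ∑ j : Fin 3, S (k + Pi.single j 1) := by
    intro k
    rw [← lap_eq, Fin.sum_univ_three]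
    have c00 : (k + Pi.single (0 : Fin 3) 1 : Fin 3 → ℕ) 0 = k 0 + 1 := by simp
    have c01 : (k + Pi.single (0 : Fin 3) 1 : Fin 3 → ℕ) 1 = k 1 := by
      simp [Pi.single_apply]
    have c02 : (k + Pi.single (0 : Fin 3) 1 : Fin 3 → ℕ) 2 = k 2 := by
      simp [Pi.single_apply]
    have c10 : (k + Pi.single (1 : Fin 3) 1 : Fin 3 → ℕ) 0 = k 0 := by
      simp [Pi.single_apply]
    have c11 : (k + Pi.single (1 : Fin 3) 1 : Fin 3 → ℕ) 1 = k 1 + 1 := by simp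
    have c12 : (k + Pi.single (1 : Fin 3) 1 : Fin 3 → ℕ) 2 = k 2 := by
      simp [Pi.single_apply]
    have c20 : (k + Pi.single (2 : Fin 3) 1 : Fin 3 → ℕ) 0 = k 0 := by
      simp [Pi.single_apply]
    have c21 : (k + Pi.single (2 : Fin 3) 1 : Fin 3 → ℕ) 1 = k 1 := by
      simp [Pi.single_apply]
    have c22 : (k + Pi.single (2 : Fin 3) 1 : Fin 3 → ℕ) 2 = k 2 + 1 := by simp
    simp only [hSdef, c00, c01, c02, c10, c11, c12, c20, c21, c22]
    exact lap_Tt f g (k 0) (k 1) (k 2)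
  have h0 : S 0 = f * g := by
    simp only [hSdef]
    show Tt f g 0 0 0 = f * g
    rw [Tt, Finset.Nat.antidiagonalTuple_zero_right, Finset.sum_singleton]
    have : Nat.multinomial Finset.univ (0 : Fin n → ℕ) = 1 := by simp [Nat.multinomial]
    rw [this, mderiv_zero, mderiv_zero]
    norm_num
  have hlap : (lap : MvPolynomial (Fin n) ℂ → MvPolynomial (Fin n) ℂ) = ⇑lapL :=
    funext lap_eq
  calc lap^[m] (f * g) = (⇑(lapL : Module.End ℂ (MvPolynomial (Fin n) ℂ)))^[m] (S 0) := by
        rw [h0, hlap]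
    _ = ∑ k ∈ Finset.Nat.antidiagonalTuple 3 m,
          (Nat.multinomial Finset.univ k : ℂ) • S k := iter_formula _ S hS m
    _ = _ := by
        refine Finset.sum_congr rfl fun k _ => ?_
        simp only [hSdef]
        rw [Tt, Finset.smul_sum]
        refine Finset.sum_congr rfl fun s _ => ?_
        rw [smul_smul]
        congr 1
        push_cast
        ring
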